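/- There exists a countable conical refinement monoid that is not separative. -/

import Mathlib

/-- The algebraic preorder on a commutative monoid: `x ≤ y` iff `∃ z, y = x + z`. -/
def AlgLE {M : Type*} [AddCommMonoid M] (x y : M) : Prop := ∃ z, y = x + z

/-- A monoid is conical if `x + y = 0` implies `x = 0` and `y = 0`. -/
def IsConical (M : Type*) [AddCommMonoid M] : Prop := ∀ x y : M, x + y = 0 → x = 0 ∧ y = 0

/-- A refinement monoid: every equality `a + b = c + d` admits a refinement. -/
def IsRefinement (M : Type*) [AddCommMonoid M] : Prop :=
  ∀ a b c d : M, a + b = c + d →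
    ∃ x y z w : M, a = x + y ∧ b = z + w ∧ c = x + z ∧ d = y + w

/-- Separative: `a + a = a + b` and `b + b = a + b` imply `a = b`. -/
def IsSeparative (M : Type*) [AddCommMonoid M] : Prop :=
  ∀ a b : M, a + a = a + b → b + b = a + b → a = b

/-- A prime element: `p ≠ 0` and `p ≤ a + b` implies `p ≤ a` or `p ≤ b`
(algebraic preorder). -/
def IsPrimeElem {M : Type*} [AddCommMonoid M] (p : M) : Prop :=
  p ≠ 0 ∧ ∀ a b : M, AlgLE p (a + b) → AlgLE p a ∨ AlgLE p b

/-- Primely generated: every element is a finite sum of prime elements. -/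
def PrimelyGenerated (M : Type*) [AddCommMonoid M] : Prop :=
  ∀ x : M, ∃ l : Multiset M, (∀ p ∈ l, IsPrimeElem p) ∧ x = l.sum

/-- Antisymmetric: the algebraic preorder is a partial order. -/
def IsAntisymmetric (M : Type*) [AddCommMonoid M] : Prop :=
  ∀ x y : M, AlgLE x y → AlgLE y x → x = y

/-- A primitive monoid: an antisymmetric, primely generated refinement monoid. -/
def IsPrimitive (M : Type*) [AddCommMonoid M] : Prop :=
  IsAntisymmetric M ∧ PrimelyGenerated M ∧ IsRefinement M

/-- `M` is a countable conical refinement monoid which is not separative. -/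
def IsNonSeparativeCCRM (M : Type) [AddCommMonoid M] : Prop :=
  Countable M ∧ IsConical M ∧ IsRefinement M ∧ ¬ IsSeparative M



namespace NSCCRM

inductive M0 : Type
  | Z : M0
  | A : M0
  | B : M0
  | S : ℕ → M0
deriving DecidableEq

namespace M0

def add : M0 → M0 → M0
  | Z, x => x
  | x, Z => x
  | A, A => S 0
  | A, B => S 0
  | B, A => S 0
  | B, B => S 0
  | A, S n => S (n+1)
  | S n, A => S (n+1)
  | B, S n => S (n+1)
  | S n, B => S (n+1)
  | S n, S m => S (n+m+2)

instance : Zero M0 := ⟨Z⟩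
instance : Add M0 := ⟨add⟩

instance : AddCommMonoid M0 where
  add_assoc := by
    intro x y z
    rcases x with _|_|_|n <;> rcases y with _|_|_|m <;> rcases z with _|_|_|k <;>
      simp only [(· + ·), Add.add, add] <;>
      first
        | rfl
        | (refine congrArg S ?_; simp only [Nat.add_eq]; omega)
  zero_add := by intro x; cases x <;> rfl
  add_zero := by intro x; cases x <;> rfl
  add_comm := by
    intro x y
    rcases x with _|_|_|n <;> rcases y with _|_|_|m <;>
      simp only [(· + ·), Add.add, add] <;>
      first
        | rfl
        | (refine congrArg S ?_; simp only [Nat.add_eq]; omega)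
  nsmul := nsmulRec
  nsmul_zero := fun _ => rfl
  nsmul_succ := fun _ _ => rfl

lemma add_def (x y : M0) : x + y = add x y := rfl

lemma zero_def : (0 : M0) = Z := rfl

lemma conical : IsConical M0 := by
  intro x y h
  rcases x with _|_|_|n <;> rcases y with _|_|_|m <;>
    simp_all [add_def, add, zero_def]

lemma nonsep₁ : A + A = A + B := rfl
lemma nonsep₂ : B + B = A + B := rfl
lemma a_ne_b : A ≠ B := by simp

instance : Countable M0 := by
  have : Function.Injective (fun x : M0 => match x with
    | Z => 0 | A => 1 | B => 2 | S n => n + 3) := by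
    intro x y h
    rcases x with _|_|_|n <;> rcases y with _|_|_|m <;> simp_all
  exact this.countable

end M0

end NSCCRM


namespace NSCCRM

/-! ### One refinement step -/

/-- A nondegenerate equation `a + b = c + d` in `M`. -/
structure Eqn (M : Type) [AddCommMonoid M] where
  a : M
  b : M
  c : M
  d : M
  rel : a + b = c + d
  ha : a ≠ 0
  hb : b ≠ 0
  hc : c ≠ 0
  hd : d ≠ 0

abbrev V4 : Type := ℕ × ℕ × ℕ × ℕ

/-- From resolution coefficients `(α,β,γ,δ)` (counting uses of the relations
`a = x+y`, `b = z+w`, `c = x+z`, `d = y+w`) to piece counts `(px,py,pz,pw)`. -/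
def combine (v : V4) : V4 :=
  (v.1 + v.2.2.1, v.1 + v.2.2.2, v.2.1 + v.2.2.1, v.2.1 + v.2.2.2)

lemma combine_add (v w : V4) : combine (v + w) = combine v + combine w := by
  simp only [combine, Prod.ext_iff, Prod.fst_add, Prod.snd_add]
  omega

lemma combine_zero : combine 0 = 0 := rfl

inductive RL : Type | rA | rB | rC | rD
open RL

variable {M : Type} [AddCommMonoid M]

def slot (R : RL) (e : Eqn M) : M :=
  match R with
  | rA => e.a
  | rB => e.b
  | rC => e.c
  | rD => e.d

def runit (R : RL) : V4 :=
  match R with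
  | rA => (1,0,0,0)
  | rB => (0,1,0,0)
  | rC => (0,0,1,0)
  | rD => (0,0,0,1)

def rpair (R : RL) : V4 := combine (runit R)

/-- Value of a resolution coefficient vector. -/
def val (e : Eqn M) (v : V4) : M :=
  v.1 • e.a + v.2.1 • e.b + v.2.2.1 • e.c + v.2.2.2 • e.d

lemma val_zero (e : Eqn M) : val e 0 = 0 := by simp [val]

lemma val_add (e : Eqn M) (v w : V4) : val e (v + w) = val e v + val e w := by
  simp only [val, Prod.fst_add, Prod.snd_add, add_nsmul]
  abel

lemma val_runit (e : Eqn M) (R : RL) : val e (runit R) = slot R e := by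
  cases R <;> simp [val, runit, slot]

/-- The ambient monoid for one step: old elements plus formal pieces. -/
abbrev FF (M : Type) [AddCommMonoid M] : Type := Eqn M →₀ V4
abbrev PP (M : Type) [AddCommMonoid M] : Type := M × FF M

/-- Elementary rewriting relation. -/
inductive SRel : PP M → PP M → Prop
  | mk (m : M) (f : FF M) (e : Eqn M) (R : RL) :
      SRel (m + slot R e, f) (m, f + Finsupp.single e (rpair R))

def SymR (p q : PP M) : Prop := SRel p q ∨ SRel q p

lemma SRel.add_right {p q : PP M} (h : SRel p q) (u : PP M) : SRel (p + u) (q + u) := by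
  obtain ⟨m, f, e, R⟩ := h
  have h2 := SRel.mk (m + u.1) (f + u.2) e R
  have key1 : m + u.1 + slot R e = m + slot R e + u.1 := add_right_comm _ _ _
  have key2 : f + u.2 + Finsupp.single e (rpair R)
      = f + Finsupp.single e (rpair R) + u.2 := add_right_comm _ _ _
  rw [key1, key2] at h2
  exact h2

lemma eqvgen_add_right {p q : PP M} (h : Relation.EqvGen (SymR (M := M)) p q) (u : PP M) :
    Relation.EqvGen (SymR (M := M)) (p + u) (q + u) := by
  induction h with
  | rel x y hxy =>
      exact Relation.EqvGen.rel _ _ (hxy.imp (fun h => h.add_right u) (fun h => h.add_right u))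
  | refl x => exact Relation.EqvGen.refl _
  | symm x y _ ih => exact ih.symm _ _
  | trans x y z _ _ ih1 ih2 => exact ih1.trans _ _ _ ih2

/-- The congruence generated by the refinement relations. -/
def stepCon (M : Type) [AddCommMonoid M] : AddCon (PP M) where
  r := Relation.EqvGen (SymR (M := M))
  iseqv := Relation.EqvGen.is_equivalence _
  add' := by
    intro w x y z h1 h2
    have s1 := eqvgen_add_right h1 y
    have s2 := eqvgen_add_right h2 x
    have s1 : Relation.EqvGen (SymR (M := M)) (w + y) (x + y) := eqvgen_add_right h1 y
    have s2 : Relation.EqvGen (SymR (M := M)) (x + y) (x + z) := by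
      have h3 := eqvgen_add_right h2 x
      rw [add_comm y x, add_comm z x] at h3
      exact h3
    exact s1.trans _ _ _ s2

/-- The one-step refinement extension. -/
def StepM (M : Type) [AddCommMonoid M] : Type := (stepCon M).Quotient

noncomputable instance : AddCommMonoid (StepM M) := by unfold StepM; infer_instance

noncomputable def mkP : PP M →+ StepM M := AddCon.mk' _

noncomputable def ιStep : M →+ StepM M := (mkP (M := M)).comp (AddMonoidHom.inl M (FF M))

/-- The evaluation invariant: `p` resolves to the old element `t`. -/
def Good (p : PP M) (t : M) : Prop :=
  ∃ g : FF M, (∀ e, combine (g e) = p.2 e) ∧ t = p.1 + g.sum val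

end NSCCRM
namespace NSCCRM
open RL
variable {M : Type} [AddCommMonoid M]

lemma stepCon_iff {p q : PP M} : (stepCon M) p q ↔ Relation.EqvGen (SymR (M := M)) p q :=
  Iff.rfl

/-- Key combinatorial lemma: a resolution of `u + pair R` yields a resolution of `u`
    whose value drops exactly by `slot R`. -/
lemma subtract (e : Eqn M) (R : RL) (v u : V4) (h : combine v = u + rpair R) :
    ∃ v', combine v' = u ∧ val e v = val e v' + slot R e := by
  obtain ⟨va, vb, vc, vd⟩ := v
  obtain ⟨up, uq, ur, us⟩ := u
  have hrel : ∀ X : M, X + (e.a + e.b) = X + (e.c + e.d) := fun X => by rw [e.rel]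
  cases R with
  | rA =>
    simp only [combine, rpair, runit, Prod.ext_iff, Prod.mk_add_mk] at h
    obtain ⟨h1, h2, h3, h4⟩ := h
    rcases Nat.eq_zero_or_pos va with hz | hp
    · subst hz
      have hvc : vc = up + 1 := by omega
      have hvd : vd = uq + 1 := by omega
      subst hvc; subst hvd
      refine ⟨(0, vb + 1, up, uq), by simp [combine, Prod.ext_iff]; omega, ?_⟩
      simp only [val, slot, succ_nsmul, zero_nsmul]
      calc 0 + vb • e.b + (up • e.c + e.c) + (uq • e.d + e.d)
          = (vb • e.b + up • e.c + uq • e.d) + (e.c + e.d) := by abel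
        _ = (vb • e.b + up • e.c + uq • e.d) + (e.a + e.b) := (hrel _).symm
        _ = 0 + (vb • e.b + e.b) + up • e.c + uq • e.d + e.a := by abel
    · obtain ⟨va', rfl⟩ : ∃ va', va = va' + 1 := ⟨va - 1, by omega⟩
      refine ⟨(va', vb, vc, vd), by simp [combine, Prod.ext_iff]; omega, ?_⟩
      simp only [val, slot, succ_nsmul]
      abel
  | rB =>
    simp only [combine, rpair, runit, Prod.ext_iff, Prod.mk_add_mk] at h
    obtain ⟨h1, h2, h3, h4⟩ := h
    rcases Nat.eq_zero_or_pos vb with hz | hp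
    · subst hz
      have hvc : vc = ur + 1 := by omega
      have hvd : vd = us + 1 := by omega
      subst hvc; subst hvd
      refine ⟨(va + 1, 0, ur, us), by simp [combine, Prod.ext_iff]; omega, ?_⟩
      simp only [val, slot, succ_nsmul, zero_nsmul]
      calc va • e.a + 0 + (ur • e.c + e.c) + (us • e.d + e.d)
          = (va • e.a + ur • e.c + us • e.d) + (e.c + e.d) := by abel
        _ = (va • e.a + ur • e.c + us • e.d) + (e.a + e.b) := (hrel _).symm
        _ = va • e.a + e.a + 0 + ur • e.c + us • e.d + e.b := by abel
    · obtain ⟨vb', rfl⟩ : ∃ vb', vb = vb' + 1 := ⟨vb - 1, by omega⟩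
      refine ⟨(va, vb', vc, vd), by simp [combine, Prod.ext_iff]; omega, ?_⟩
      simp only [val, slot, succ_nsmul]
      abel
  | rC =>
    simp only [combine, rpair, runit, Prod.ext_iff, Prod.mk_add_mk] at h
    obtain ⟨h1, h2, h3, h4⟩ := h
    rcases Nat.eq_zero_or_pos vc with hz | hp
    · subst hz
      have hva : va = up + 1 := by omega
      have hvb : vb = ur + 1 := by omega
      subst hva; subst hvb
      refine ⟨(up, ur, 0, vd + 1), by simp [combine, Prod.ext_iff]; omega, ?_⟩
      simp only [val, slot, succ_nsmul, zero_nsmul]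
      calc (up • e.a + e.a) + (ur • e.b + e.b) + 0 + vd • e.d
          = (up • e.a + ur • e.b + vd • e.d) + (e.a + e.b) := by abel
        _ = (up • e.a + ur • e.b + vd • e.d) + (e.c + e.d) := hrel _
        _ = up • e.a + ur • e.b + 0 + (vd • e.d + e.d) + e.c := by abel
    · obtain ⟨vc', rfl⟩ : ∃ vc', vc = vc' + 1 := ⟨vc - 1, by omega⟩
      refine ⟨(va, vb, vc', vd), by simp [combine, Prod.ext_iff]; omega, ?_⟩
      simp only [val, slot, succ_nsmul]
      abel
  | rD =>
    simp only [combine, rpair, runit, Prod.ext_iff, Prod.mk_add_mk] at h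
    obtain ⟨h1, h2, h3, h4⟩ := h
    rcases Nat.eq_zero_or_pos vd with hz | hp
    · subst hz
      have hva : va = uq + 1 := by omega
      have hvb : vb = us + 1 := by omega
      subst hva; subst hvb
      refine ⟨(uq, us, vc + 1, 0), by simp [combine, Prod.ext_iff]; omega, ?_⟩
      simp only [val, slot, succ_nsmul, zero_nsmul]
      calc (uq • e.a + e.a) + (us • e.b + e.b) + vc • e.c + 0
          = (uq • e.a + us • e.b + vc • e.c) + (e.a + e.b) := by abel
        _ = (uq • e.a + us • e.b + vc • e.c) + (e.c + e.d) := hrel _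
        _ = uq • e.a + us • e.b + (vc • e.c + e.c) + 0 + e.d := by abel
    · obtain ⟨vd', rfl⟩ : ∃ vd', vd = vd' + 1 := ⟨vd - 1, by omega⟩
      refine ⟨(va, vb, vc, vd'), by simp [combine, Prod.ext_iff]; omega, ?_⟩
      simp only [val, slot, succ_nsmul]
      abel

lemma good_srel {p q : PP M} (h : SRel p q) (t : M) : Good p t ↔ Good q t := by
  obtain ⟨m, f, e, R⟩ := h
  constructor
  · rintro ⟨g, hg, ht⟩
    refine ⟨g + Finsupp.single e (runit R), ?_, ?_⟩
    · intro e'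
      rw [Finsupp.add_apply, Finsupp.add_apply, combine_add]
      by_cases he : e = e'
      · subst he
        rw [Finsupp.single_eq_same, Finsupp.single_eq_same, hg e]
        rfl
      · rw [Finsupp.single_eq_of_ne' he, Finsupp.single_eq_of_ne' he, hg e',
          combine_zero]
    · rw [Finsupp.sum_add_index' (fun _ => val_zero _) (fun e' v w => val_add e' v w),
        Finsupp.sum_single_index (val_zero e), val_runit, ht]
      dsimp only; abel
  · rintro ⟨g, hg, ht⟩
    have he0 : combine (g e) = f e + rpair R := by
      have h0 := hg e
      rwa [Finsupp.add_apply, Finsupp.single_eq_same] at h0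
    obtain ⟨v', hv', hval⟩ := subtract e R (g e) (f e) he0
    have hsplit : g.sum val = val e (g e) + (Finsupp.erase e g).sum val := by
      conv_lhs => rw [← Finsupp.single_add_erase e g]
      rw [Finsupp.sum_add_index' (fun _ => val_zero _) (fun e' v w => val_add e' v w),
        Finsupp.sum_single_index (val_zero e)]
    refine ⟨Finsupp.erase e g + Finsupp.single e v', ?_, ?_⟩
    · intro e'
      rw [Finsupp.add_apply, combine_add]
      by_cases he : e' = e
      · subst he
        rw [Finsupp.erase_same, Finsupp.single_eq_same, combine_zero, zero_add, hv']
      · rw [Finsupp.erase_ne he, Finsupp.single_eq_of_ne' (Ne.symm he), combine_zero,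
          add_zero]
        have h1 := hg e'
        rwa [Finsupp.add_apply, Finsupp.single_eq_of_ne' (Ne.symm he), add_zero] at h1
    · rw [Finsupp.sum_add_index' (fun _ => val_zero _) (fun e' v w => val_add e' v w),
        Finsupp.sum_single_index (val_zero e), ht, hsplit, hval]
      dsimp only; abel

lemma good_con {p q : PP M} (h : (stepCon M) p q) (t : M) : Good p t ↔ Good q t := by
  rw [stepCon_iff] at h
  induction h with
  | rel x y hxy =>
      rcases hxy with h | h
      · exact good_srel h t
      · exact (good_srel h t).symm
  | refl x => exact Iff.rfl
  | symm x y _ ih => exact ih.symm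
  | trans x y z _ _ ih1 ih2 => exact ih1.trans ih2

lemma good_mk0 {m t : M} : Good ((m, 0) : PP M) t ↔ t = m := by
  constructor
  · rintro ⟨g, hg, ht⟩
    have hz : ∀ e, g e = 0 := by
      intro e
      have h0 := hg e
      simp only [combine, Finsupp.coe_zero, Pi.zero_apply, Prod.ext_iff,
        Prod.fst_zero, Prod.snd_zero] at h0 ⊢
      omega
    have : g = 0 := Finsupp.ext fun e => hz e
    subst this
    simpa using ht
  · rintro rfl
    exact ⟨0, fun e => by simp [combine_zero], by simp⟩

lemma step_conservative {m m' : M} (h : (stepCon M) ((m, 0) : PP M) (m', 0)) : m = m' := by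
  have h1 : Good ((m', 0) : PP M) m := (good_con h m).mp (good_mk0.mpr rfl)
  exact good_mk0.mp h1

lemma mkP_eq {p q : PP M} : (mkP p : StepM M) = mkP q ↔ (stepCon M) p q := AddCon.eq _

lemma ιStep_injective : Function.Injective (ιStep (M := M)) := by
  intro m m' h
  exact step_conservative (mkP_eq.mp h)

lemma conical_nsmul (hM : IsConical M) (n : ℕ) (x : M) (hx : x ≠ 0) (h : n • x = 0) :
    n = 0 := by
  cases n with
  | zero => rfl
  | succ k =>
      rw [succ_nsmul] at h
      exact absurd (hM _ _ h).2 hx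

lemma conical_finset_sum {ι : Type*} (hM : IsConical M) (s : Finset ι) (f : ι → M)
    (h : (∑ i ∈ s, f i) = 0) : ∀ i ∈ s, f i = 0 := by
  classical
  induction s using Finset.cons_induction with
  | empty => simp
  | cons a s ha ih =>
      rw [Finset.sum_cons] at h
      intro i hi
      rcases Finset.mem_cons.mp hi with rfl | hi'
      · exact (hM _ _ h).1
      · exact ih (hM _ _ h).2 i hi'

lemma rel_zero (hM : IsConical M) {s : PP M} (h : (stepCon M) s (0, 0)) : s = (0, 0) := by
  have hg : Good s 0 := (good_con h 0).mpr (good_mk0.mpr rfl)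
  obtain ⟨g, hcomb, h0⟩ := hg
  have h1 := hM _ _ h0.symm
  have hm : s.1 = 0 := h1.1
  have hsum : g.sum val = 0 := h1.2
  have hterm : ∀ e ∈ g.support, val e (g e) = 0 :=
    conical_finset_sum hM g.support (fun e => val e (g e)) hsum
  have hgz : ∀ e, g e = 0 := by
    intro e
    by_cases he : e ∈ g.support
    · have h2 := hterm e he
      unfold val at h2
      have h3 := hM _ _ h2
      have h4 := hM _ _ h3.1
      have h5 := hM _ _ h4.1
      have ea := conical_nsmul hM _ _ e.ha h5.1
      have eb := conical_nsmul hM _ _ e.hb h5.2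
      have ec := conical_nsmul hM _ _ e.hc h4.2
      have ed := conical_nsmul hM _ _ e.hd h3.2
      simp only [Prod.ext_iff, Prod.fst_zero, Prod.snd_zero]
      exact ⟨ea, eb, ec, ed⟩
    · exact Finsupp.notMem_support_iff.mp he
  have hf : s.2 = 0 := Finsupp.ext fun e => by rw [← hcomb e, hgz e, combine_zero]; rfl
  exact Prod.ext hm hf

lemma v4_conical (u v : V4) (h : u + v = 0) : u = 0 ∧ v = 0 := by
  simp only [Prod.ext_iff, Prod.fst_add, Prod.snd_add, Prod.fst_zero, Prod.snd_zero] at h ⊢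
  omega

lemma step_conical (hM : IsConical M) : IsConical (StepM M) := by
  intro x y h
  obtain ⟨p, rfl⟩ := AddCon.mk'_surjective x
  obtain ⟨q, rfl⟩ := AddCon.mk'_surjective y
  have h1 : (mkP (p + q) : StepM M) = mkP (0, 0) := by
    rw [map_add]; exact h
  have h2 : p + q = ((0 : M), (0 : FF M)) := rel_zero hM (mkP_eq.mp h1)
  have hp1 : p.1 + q.1 = 0 := congrArg Prod.fst h2
  have hp2 : p.2 + q.2 = 0 := congrArg Prod.snd h2
  have hcm := hM _ _ hp1
  have happ : ∀ e, p.2 e + q.2 e = 0 := by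
    intro e
    rw [← Finsupp.add_apply, hp2]
    rfl
  have hcf : ∀ e, p.2 e = 0 ∧ q.2 e = 0 := fun e => v4_conical _ _ (happ e)
  have hP : p = ((0 : M), (0 : FF M)) := Prod.ext hcm.1 (Finsupp.ext fun e => (hcf e).1)
  have hQ : q = ((0 : M), (0 : FF M)) := Prod.ext hcm.2 (Finsupp.ext fun e => (hcf e).2)
  constructor
  · show (mkP p : StepM M) = 0
    rw [hP]
    exact map_zero _
  · show (mkP q : StepM M) = 0
    rw [hQ]
    exact map_zero _

end NSCCRM
namespace NSCCRM
open RL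
variable {M : Type} [AddCommMonoid M]

/-- The defining relations, at the level of the quotient. -/
lemma ιStep_slot (e : Eqn M) (R : RL) :
    ιStep (slot R e) = mkP ((0 : M), Finsupp.single e (rpair R)) := by
  have h := SRel.mk (0 : M) (0 : FF M) e R
  rw [zero_add, zero_add] at h
  exact mkP_eq.mpr (Relation.EqvGen.rel _ _ (Or.inl h))

lemma single_piece_add (e : Eqn M) (v w : V4) :
    (mkP ((0 : M), Finsupp.single e v) : StepM M) + mkP ((0 : M), Finsupp.single e w)
      = mkP ((0 : M), Finsupp.single e (v + w)) := by
  rw [← map_add]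
  congr 1
  refine Prod.ext (by simp) ?_
  show Finsupp.single e v + Finsupp.single e w = Finsupp.single e (v + w)
  rw [Finsupp.single_add]

/-- Every nondegenerate equation of `M` acquires a refinement in `StepM M`. -/
lemma step_refine (e : Eqn M) :
    ∃ x y z w : StepM M,
      ιStep e.a = x + y ∧ ιStep e.b = z + w ∧ ιStep e.c = x + z ∧ ιStep e.d = y + w := by
  refine ⟨mkP ((0 : M), Finsupp.single e ((1,0,0,0) : V4)),
          mkP ((0 : M), Finsupp.single e ((0,1,0,0) : V4)),
          mkP ((0 : M), Finsupp.single e ((0,0,1,0) : V4)),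
          mkP ((0 : M), Finsupp.single e ((0,0,0,1) : V4)), ?_, ?_, ?_, ?_⟩
  · have h := ιStep_slot e rA
    rw [single_piece_add]
    exact h
  · have h := ιStep_slot e rB
    rw [single_piece_add]
    exact h
  · have h := ιStep_slot e rC
    rw [single_piece_add]
    exact h
  · have h := ιStep_slot e rD
    rw [single_piece_add]
    exact h

lemma eqn_countable [Countable M] : Countable (Eqn M) := by
  have hinj : Function.Injective (fun e : Eqn M => (e.a, e.b, e.c, e.d)) := by
    intro e1 e2 h
    obtain ⟨a1, b1, c1, d1, r1, p1, p2, p3, p4⟩ := e1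
    obtain ⟨a2, b2, c2, d2, r2, q1, q2, q3, q4⟩ := e2
    simp only [Prod.mk.injEq] at h
    obtain ⟨h1, h2, h3, h4⟩ := h
    subst h1; subst h2; subst h3; subst h4
    rfl
  exact hinj.countable

lemma step_countable [Countable M] : Countable (StepM M) := by
  haveI : Countable (Eqn M) := eqn_countable
  haveI : Countable (PP M) := inferInstance
  exact (AddCon.mk'_surjective (c := stepCon M)).countable

end NSCCRM
namespace NSCCRM

structure Pk : Type 1 where
  α : Type
  inst : AddCommMonoid α

attribute [instance] Pk.inst

noncomputable def stepPk (X : Pk) : Pk := ⟨StepM X.α, inferInstance⟩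

noncomputable def tow : ℕ → Pk
  | 0 => ⟨M0, inferInstance⟩
  | n + 1 => stepPk (tow n)

abbrev TT (n : ℕ) : Type := (tow n).α

noncomputable def stepι (n : ℕ) : TT n →+ TT (n + 1) := ιStep (M := TT n)

lemma stepι_injective (n : ℕ) : Function.Injective (stepι n) := ιStep_injective

lemma tow_conical : ∀ n, IsConical (TT n)
  | 0 => M0.conical
  | n + 1 => step_conical (tow_conical n)

lemma tow_countable : ∀ n, Countable (TT n)
  | 0 => inferInstanceAs (Countable M0)
  | n + 1 => by
      haveI := tow_countable n
      exact step_countable (M := TT n)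

noncomputable def push (m : ℕ) : (k : ℕ) → TT m →+ TT (m + k)
  | 0 => AddMonoidHom.id _
  | k + 1 => (stepι (m + k)).comp (push m k)

noncomputable def eqHom {p q : ℕ} (h : p = q) : TT p →+ TT q := by subst h; exact AddMonoidHom.id _

lemma eqHom_rfl {p : ℕ} (h : p = p) (x : TT p) : eqHom h x = x := rfl

lemma eqHom_eqHom {p q r : ℕ} (h1 : p = q) (h2 : q = r) (x : TT p) :
    eqHom h2 (eqHom h1 x) = eqHom (h1.trans h2) x := by subst h1; subst h2; rfl

lemma stepι_eqHom {p q : ℕ} (h : p = q) (x : TT p) :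
    stepι q (eqHom h x) = eqHom (by rw [h]) (stepι p x) := by subst h; rfl

lemma push_congr {m k k' : ℕ} (h : k = k') (x : TT m) :
    push m k' x = eqHom (by rw [h]) (push m k x) := by subst h; rfl

noncomputable def lift (n N : ℕ) (h : n ≤ N) : TT n →+ TT N :=
  (eqHom (Nat.add_sub_cancel' h)).comp (push n (N - n))

lemma lift_self (n : ℕ) (h : n ≤ n) (x : TT n) : lift n n h x = x := by
  unfold lift
  simp only [AddMonoidHom.comp_apply]
  rw [push_congr (Nat.sub_self n).symm x, eqHom_eqHom]
  exact eqHom_rfl _ x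

lemma lift_succ (n N : ℕ) (h : n ≤ N) (h' : n ≤ N + 1) (x : TT n) :
    lift n (N + 1) h' x = stepι N (lift n N h x) := by
  unfold lift
  simp only [AddMonoidHom.comp_apply]
  have hk : N - n + 1 = N + 1 - n := by omega
  rw [push_congr hk x, eqHom_eqHom, stepι_eqHom]
  rfl

lemma lift_trans (n N N' : ℕ) (h : n ≤ N) (h' : N ≤ N') (x : TT n) :
    lift N N' h' (lift n N h x) = lift n N' (h.trans h') x := by
  induction N', h' using Nat.le_induction with
  | base => rw [lift_self]
  | succ N' hNN' ih =>
      rw [lift_succ N N' hNN' _ (lift n N h x), ih, lift_succ n N' (h.trans hNN') _ x]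

lemma lift_injective (n N : ℕ) (h : n ≤ N) : Function.Injective (lift n N h) := by
  induction N, h using Nat.le_induction with
  | base =>
      intro a b hab
      rwa [lift_self, lift_self] at hab
  | succ N hNN ih =>
      intro a b hab
      rw [lift_succ n N hNN _ a, lift_succ n N hNN _ b] at hab
      exact ih (stepι_injective N hab)

/-! ### The colimit -/

def SG : Type := Σ n : ℕ, TT n

inductive CRel : SG → SG → Prop
  | mk (n : ℕ) (x : TT n) : CRel ⟨n, x⟩ ⟨n + 1, stepι n x⟩

def colSetoid : Setoid SG := ⟨Relation.EqvGen CRel, Relation.EqvGen.is_equivalence _⟩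

def Colim : Type := Quotient colSetoid

def mkC (n : ℕ) (x : TT n) : Colim := Quotient.mk colSetoid ⟨n, x⟩

lemma mkC_step (n : ℕ) (x : TT n) : mkC n x = mkC (n + 1) (stepι n x) :=
  Quotient.sound (Relation.EqvGen.rel _ _ (CRel.mk n x))

lemma mkC_lift (n N : ℕ) (h : n ≤ N) (x : TT n) : mkC n x = mkC N (lift n N h x) := by
  induction N, h using Nat.le_induction with
  | base => rw [lift_self]
  | succ N hNN ih => rw [ih, mkC_step N, lift_succ n N hNN]

lemma mkC_eq_iff {n m : ℕ} {x : TT n} {y : TT m} :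
    mkC n x = mkC m y ↔ ∃ (N : ℕ) (hn : n ≤ N) (hm : m ≤ N), lift n N hn x = lift m N hm y := by
  constructor
  · intro h
    have hex := Quotient.exact h
    have key : ∀ (s t : SG), Relation.EqvGen CRel s t →
        ∃ (N : ℕ) (hs : s.1 ≤ N) (ht : t.1 ≤ N), lift s.1 N hs s.2 = lift t.1 N ht t.2 := by
      intro s t hst
      induction hst with
      | rel a b hab =>
          obtain ⟨k, z⟩ := hab
          exact ⟨k + 1, Nat.le_succ k, le_rfl, by
            rw [lift_succ k k le_rfl _ z, lift_self, lift_self]⟩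
      | refl a => exact ⟨a.1, le_rfl, le_rfl, rfl⟩
      | symm a b _ ih =>
          obtain ⟨N, hs, ht, hh⟩ := ih
          exact ⟨N, ht, hs, hh.symm⟩
      | trans a b c _ _ ih1 ih2 =>
          obtain ⟨N1, ha1, hb1, e1⟩ := ih1
          obtain ⟨N2, hb2, hc2, e2⟩ := ih2
          refine ⟨max N1 N2, ha1.trans (le_max_left _ _), hc2.trans (le_max_right _ _), ?_⟩
          have e1' := congrArg (lift N1 (max N1 N2) (le_max_left _ _)) e1
          have e2' := congrArg (lift N2 (max N1 N2) (le_max_right _ _)) e2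
          rw [lift_trans, lift_trans] at e1'
          rw [lift_trans, lift_trans] at e2'
          rw [e1']
          rw [← e2']
    exact key _ _ hex
  · rintro ⟨N, hn, hm, hh⟩
    rw [mkC_lift n N hn x, mkC_lift m N hm y, hh]

end NSCCRM
namespace NSCCRM

noncomputable def addAux (s t : SG) : Colim :=
  mkC (max s.1 t.1)
    (lift s.1 _ (le_max_left _ _) s.2 + lift t.1 _ (le_max_right _ _) t.2)

lemma add_spec_aux (s t : SG) (N1 N2 : ℕ) (hs1 : s.1 ≤ N1) (ht1 : t.1 ≤ N1)
    (hs2 : s.1 ≤ N2) (ht2 : t.1 ≤ N2) :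
    mkC N1 (lift s.1 N1 hs1 s.2 + lift t.1 N1 ht1 t.2)
      = mkC N2 (lift s.1 N2 hs2 s.2 + lift t.1 N2 ht2 t.2) := by
  rw [mkC_lift N1 (max N1 N2) (le_max_left _ _), mkC_lift N2 (max N1 N2) (le_max_right _ _),
    map_add, map_add, lift_trans, lift_trans, lift_trans, lift_trans]

lemma addAux_spec (s t : SG) (N : ℕ) (hs : s.1 ≤ N) (ht : t.1 ≤ N) :
    addAux s t = mkC N (lift s.1 N hs s.2 + lift t.1 N ht t.2) :=
  add_spec_aux s t _ N (le_max_left _ _) (le_max_right _ _) hs ht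

lemma addAux_wd (s t s' t' : SG) (hs : (colSetoid).r s s') (ht : (colSetoid).r t t') :
    addAux s t = addAux s' t' := by
  have hse : mkC s.1 s.2 = mkC s'.1 s'.2 := Quotient.sound hs
  have hte : mkC t.1 t.2 = mkC t'.1 t'.2 := Quotient.sound ht
  obtain ⟨Ns, hs1, hs2, es⟩ := mkC_eq_iff.mp hse
  obtain ⟨Nt, ht1, ht2, et⟩ := mkC_eq_iff.mp hte
  set N := max Ns Nt with hN
  have hsN : Ns ≤ N := le_max_left _ _
  have htN : Nt ≤ N := le_max_right _ _
  rw [addAux_spec s t N (hs1.trans hsN) (ht1.trans htN),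
    addAux_spec s' t' N (hs2.trans hsN) (ht2.trans htN)]
  have es' := congrArg (lift Ns N hsN) es
  have et' := congrArg (lift Nt N htN) et
  rw [lift_trans, lift_trans] at es'
  rw [lift_trans, lift_trans] at et'
  rw [es', et']

noncomputable instance : Add Colim :=
  ⟨Quotient.lift₂ addAux (fun _ _ _ _ h1 h2 => addAux_wd _ _ _ _ h1 h2)⟩

noncomputable instance : Zero Colim := ⟨mkC 0 0⟩

lemma mkC_add (n m : ℕ) (x : TT n) (y : TT m) :
    mkC n x + mkC m y = addAux ⟨n, x⟩ ⟨m, y⟩ := rfl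

lemma mkC_add_spec {n m N : ℕ} (hn : n ≤ N) (hm : m ≤ N) (x : TT n) (y : TT m) :
    mkC n x + mkC m y = mkC N (lift n N hn x + lift m N hm y) := by
  rw [mkC_add]
  exact addAux_spec ⟨n, x⟩ ⟨m, y⟩ N hn hm

lemma mkC_add_same (n : ℕ) (x y : TT n) : mkC n x + mkC n y = mkC n (x + y) := by
  rw [mkC_add_spec le_rfl le_rfl, lift_self, lift_self]

lemma zero_def' : (0 : Colim) = mkC 0 0 := rfl

lemma mkC_zero (n : ℕ) : mkC n (0 : TT n) = 0 := by
  rw [zero_def']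
  exact mkC_eq_iff.mpr ⟨n, le_rfl, Nat.zero_le n, by rw [lift_self, map_zero]⟩

noncomputable instance : AddCommMonoid Colim where
  add := (· + ·)
  zero := 0
  add_assoc := by
    intro a b c
    obtain ⟨⟨p, x⟩, rfl⟩ := Quotient.exists_rep a
    obtain ⟨⟨q, y⟩, rfl⟩ := Quotient.exists_rep b
    obtain ⟨⟨r, z⟩, rfl⟩ := Quotient.exists_rep c
    show mkC p x + mkC q y + mkC r z = mkC p x + (mkC q y + mkC r z)
    set N := max (max p q) r with hN
    have hp : p ≤ N := le_trans (le_max_left _ _) (le_max_left _ _)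
    have hq : q ≤ N := le_trans (le_max_right _ _) (le_max_left _ _)
    have hr : r ≤ N := le_max_right _ _
    rw [mkC_add_spec hp hq, mkC_add_spec (le_refl N) hr, lift_self,
      mkC_add_spec hq hr, mkC_add_spec hp (le_refl N), lift_self, add_assoc]
  zero_add := by
    intro a
    obtain ⟨⟨p, x⟩, rfl⟩ := Quotient.exists_rep a
    show (0 : Colim) + mkC p x = mkC p x
    rw [zero_def', mkC_add_spec (Nat.zero_le p) (le_refl p), map_zero, lift_self, zero_add]
  add_zero := by
    intro a
    obtain ⟨⟨p, x⟩, rfl⟩ := Quotient.exists_rep a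
    show mkC p x + (0 : Colim) = mkC p x
    rw [zero_def', mkC_add_spec (le_refl p) (Nat.zero_le p), map_zero, lift_self, add_zero]
  add_comm := by
    intro a b
    obtain ⟨⟨p, x⟩, rfl⟩ := Quotient.exists_rep a
    obtain ⟨⟨q, y⟩, rfl⟩ := Quotient.exists_rep b
    show mkC p x + mkC q y = mkC q y + mkC p x
    have hp : p ≤ max p q := le_max_left _ _
    have hq : q ≤ max p q := le_max_right _ _
    rw [mkC_add_spec hp hq, mkC_add_spec hq hp, add_comm]
  nsmul := nsmulRec
  nsmul_zero := fun _ => rfl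
  nsmul_succ := fun _ _ => rfl

lemma mkC_eq_zero_iff {n : ℕ} {x : TT n} : mkC n x = 0 ↔ x = 0 := by
  constructor
  · intro h
    rw [zero_def'] at h
    obtain ⟨N, hn, h0, he⟩ := mkC_eq_iff.mp h
    rw [map_zero] at he
    have : lift n N hn x = lift n N hn 0 := by rw [he, map_zero]
    exact lift_injective n N hn this
  · rintro rfl
    exact mkC_zero n

lemma colim_countable : Countable Colim := by
  haveI : ∀ n, Countable (TT n) := tow_countable
  haveI : Countable SG := by
    unfold SG
    infer_instance
  unfold Colim
  infer_instance

lemma colim_conical : IsConical Colim := by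
  intro a b h
  obtain ⟨⟨p, x⟩, rfl⟩ := Quotient.exists_rep a
  obtain ⟨⟨q, y⟩, rfl⟩ := Quotient.exists_rep b
  have ha : (⟦(⟨p, x⟩ : SG)⟧ : Colim) = mkC p x := rfl
  have hb : (⟦(⟨q, y⟩ : SG)⟧ : Colim) = mkC q y := rfl
  rw [ha, hb] at h ⊢
  have hp : p ≤ max p q := le_max_left _ _
  have hq : q ≤ max p q := le_max_right _ _
  rw [mkC_add_spec hp hq] at h
  have h0 := mkC_eq_zero_iff.mp h
  have hc := tow_conical (max p q) _ _ h0
  constructor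
  · rw [mkC_lift p (max p q) hp x, mkC_eq_zero_iff]
    exact hc.1
  · rw [mkC_lift q (max p q) hq y, mkC_eq_zero_iff]
    exact hc.2

end NSCCRM
namespace NSCCRM

lemma mkC_inj {n : ℕ} {x y : TT n} (h : mkC n x = mkC n y) : x = y := by
  obtain ⟨N, h1, h2, he⟩ := mkC_eq_iff.mp h
  have he' : lift n N h1 x = lift n N h1 y := he
  exact lift_injective n N h1 he'

lemma colim_refine : IsRefinement Colim := by
  intro a b c d h
  by_cases ha : a = 0
  · exact ⟨0, 0, c, d, by rw [ha, add_zero], by rw [← h, ha, zero_add],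
      (zero_add c).symm, (zero_add d).symm⟩
  by_cases hb : b = 0
  · exact ⟨c, d, 0, 0, by rw [← h, hb, add_zero], by rw [hb, add_zero],
      (add_zero c).symm, (add_zero d).symm⟩
  by_cases hc : c = 0
  · exact ⟨0, a, 0, b, (zero_add a).symm, (zero_add b).symm, by rw [hc, add_zero],
      by rw [h, hc, zero_add]⟩
  by_cases hd : d = 0
  · exact ⟨a, 0, b, 0, (add_zero a).symm, (add_zero b).symm, by rw [h, hd, add_zero],
      by rw [hd, add_zero]⟩
  -- nondegenerate case
  obtain ⟨⟨na, xa⟩, rfl⟩ := Quotient.exists_rep a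
  obtain ⟨⟨nb, xb⟩, rfl⟩ := Quotient.exists_rep b
  obtain ⟨⟨nc, xc⟩, rfl⟩ := Quotient.exists_rep c
  obtain ⟨⟨nd, xd⟩, rfl⟩ := Quotient.exists_rep d
  set N := max (max na nb) (max nc nd) with hN
  have hna : na ≤ N := le_trans (le_max_left _ _) (le_max_left _ _)
  have hnb : nb ≤ N := le_trans (le_max_right _ _) (le_max_left _ _)
  have hnc : nc ≤ N := le_trans (le_max_left _ _) (le_max_right _ _)
  have hnd : nd ≤ N := le_trans (le_max_right _ _) (le_max_right _ _)
  have ea : (⟦(⟨na, xa⟩ : SG)⟧ : Colim) = mkC N (lift na N hna xa) := mkC_lift na N hna xa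
  have eb : (⟦(⟨nb, xb⟩ : SG)⟧ : Colim) = mkC N (lift nb N hnb xb) := mkC_lift nb N hnb xb
  have ec : (⟦(⟨nc, xc⟩ : SG)⟧ : Colim) = mkC N (lift nc N hnc xc) := mkC_lift nc N hnc xc
  have ed : (⟦(⟨nd, xd⟩ : SG)⟧ : Colim) = mkC N (lift nd N hnd xd) := mkC_lift nd N hnd xd
  rw [ea] at h ha ⊢
  rw [eb] at h hb ⊢
  rw [ec] at h hc ⊢
  rw [ed] at h hd ⊢
  rw [mkC_add_same, mkC_add_same] at h
  obtain ⟨N', h1, h2, he⟩ := mkC_eq_iff.mp h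
  have he' : lift N N' h1 (lift na N hna xa) + lift N N' h1 (lift nb N hnb xb)
      = lift N N' h1 (lift nc N hnc xc) + lift N N' h1 (lift nd N hnd xd) := by
    have e1 := he
    rw [map_add, map_add] at e1
    exact e1
  set A := lift N N' h1 (lift na N hna xa) with hA
  set B := lift N N' h1 (lift nb N hnb xb) with hB
  set C := lift N N' h1 (lift nc N hnc xc) with hC
  set D := lift N N' h1 (lift nd N hnd xd) with hD
  have ea' : mkC N (lift na N hna xa) = mkC N' A := mkC_lift N N' h1 _
  have eb' : mkC N (lift nb N hnb xb) = mkC N' B := mkC_lift N N' h1 _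
  have ec' : mkC N (lift nc N hnc xc) = mkC N' C := mkC_lift N N' h1 _
  have ed' : mkC N (lift nd N hnd xd) = mkC N' D := mkC_lift N N' h1 _
  rw [ea'] at ha ⊢
  rw [eb'] at hb ⊢
  rw [ec'] at hc ⊢
  rw [ed'] at hd ⊢
  have hA0 : A ≠ 0 := fun h0 => ha (by rw [h0]; exact mkC_zero N')
  have hB0 : B ≠ 0 := fun h0 => hb (by rw [h0]; exact mkC_zero N')
  have hC0 : C ≠ 0 := fun h0 => hc (by rw [h0]; exact mkC_zero N')
  have hD0 : D ≠ 0 := fun h0 => hd (by rw [h0]; exact mkC_zero N')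
  obtain ⟨x, y, z, w, hr1, hr2, hr3, hr4⟩ :=
    step_refine (⟨A, B, C, D, he', hA0, hB0, hC0, hD0⟩ : Eqn (TT N'))
  refine ⟨mkC (N' + 1) x, mkC (N' + 1) y, mkC (N' + 1) z, mkC (N' + 1) w, ?_, ?_, ?_, ?_⟩
  · rw [mkC_step N' A, mkC_add_same (N' + 1) x y]
    exact congrArg (mkC (N' + 1)) hr1
  · rw [mkC_step N' B, mkC_add_same (N' + 1) z w]
    exact congrArg (mkC (N' + 1)) hr2
  · rw [mkC_step N' C, mkC_add_same (N' + 1) x z]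
    exact congrArg (mkC (N' + 1)) hr3
  · rw [mkC_step N' D, mkC_add_same (N' + 1) y w]
    exact congrArg (mkC (N' + 1)) hr4

lemma colim_nonsep : ¬ IsSeparative Colim := by
  intro h
  have h1 : mkC 0 M0.A + mkC 0 M0.A = mkC 0 M0.A + mkC 0 M0.B := by
    rw [mkC_add_same 0 M0.A M0.A, mkC_add_same 0 M0.A M0.B]
    exact congrArg (mkC 0) M0.nonsep₁
  have h2 : mkC 0 M0.B + mkC 0 M0.B = mkC 0 M0.A + mkC 0 M0.B := by
    rw [mkC_add_same 0 M0.B M0.B, mkC_add_same 0 M0.A M0.B]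
    exact congrArg (mkC 0) M0.nonsep₂
  have := h (mkC 0 M0.A) (mkC 0 M0.B) h1 h2
  exact M0.a_ne_b (mkC_inj this)

end NSCCRM

/-- There exists a countable conical refinement monoid that is not separative. -/
theorem statement1 : ∃ (M : Type) (instM : AddCommMonoid M), @IsNonSeparativeCCRM M instM := by
  exact ⟨NSCCRM.Colim, inferInstance,
    NSCCRM.colim_countable, NSCCRM.colim_conical, NSCCRM.colim_refine, NSCCRM.colim_nonsep⟩
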